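/- (2d functional Hodge decomposition) Let j be a translational covariant discrete vector field on ℤ_N², i.e. j_η(x,y)=j_{τ_zη}(x+z,y+z) for all z. Then there exist functions h, g on configurations and translational invariant functions C⁽¹⁾, C⁽²⁾ such that for every oriented edge e=(x,x±e⁽ⁱ⁾): j_η(e)=[τ_{e⁺}h(η)−τ_{e⁻}h(η)]+[τ_{𝔣⁺(e)}g(η)−τ_{𝔣⁻(e)}g(η)]±C⁽ⁱ⁾(η). The functions C⁽ⁱ⁾ are uniquely determined and equal (1/N²)Σ_x j_η(x,x+e⁽ⁱ⁾); h and g are unique up to additive translational invariant functions. -/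

import Mathlib

open Finset

abbrev Torus2 (N : ℕ) := ZMod N × ZMod N

/-- Translation of a configuration: `(τ_z η)(v) = η(v − z)`. -/
def trC {N : ℕ} (z : Torus2 N) (η : Torus2 N → Bool) : Torus2 N → Bool :=
  fun v => η (v - z)

/-- The four edge equations of the 2d functional Hodge decomposition
`j_η(e) = [τ_{e⁺}h − τ_{e⁻}h](η) + [τ_{𝔣⁺(e)}g − τ_{𝔣⁻(e)}g](η) ± C⁽ⁱ⁾(η)`,
for the edges `(x, x±e⁽ⁱ⁾)`, `i = 1, 2`; here `(τ_x h)(η) = h(τ_{−x}η)` and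
`τ_𝔣 = τ_a` with `a` the lower-left corner of the face `𝔣`. -/
def hodgeEqs {N : ℕ} (j : (Torus2 N → Bool) → Torus2 N → Torus2 N → ℝ)
    (h g C₁ C₂ : (Torus2 N → Bool) → ℝ) : Prop :=
  ∀ (η : Torus2 N → Bool) (x : Torus2 N),
    (j η x (x + (1, 0))
      = (h (trC (-(x + (1, 0))) η) - h (trC (-x) η))
        + (g (trC (-x) η) - g (trC (-(x - (0, 1))) η)) + C₁ η)
    ∧ (j η x (x + (0, 1))
      = (h (trC (-(x + (0, 1))) η) - h (trC (-x) η))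
        + (g (trC (-(x - (1, 0))) η) - g (trC (-x) η)) + C₂ η)
    ∧ (j η x (x - (1, 0))
      = (h (trC (-(x - (1, 0))) η) - h (trC (-x) η))
        + (g (trC (-(x - (1, 0) - (0, 1))) η) - g (trC (-(x - (1, 0))) η)) - C₁ η)
    ∧ (j η x (x - (0, 1))
      = (h (trC (-(x - (0, 1))) η) - h (trC (-x) η))
        + (g (trC (-(x - (0, 1))) η) - g (trC (-(x - (1, 0) - (0, 1))) η)) - C₂ η)

namespace FHD
variable {N : ℕ}

@[simp] lemma trC_trC (z w : Torus2 N) (η : Torus2 N → Bool) :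
    trC z (trC w η) = trC (w + z) η := by
  funext v; simp [trC, sub_sub, add_comm]

@[simp] lemma trC_zero (η : Torus2 N → Bool) : trC (0 : Torus2 N) η = η := by
  funext v; simp [trC]

def e₁ (N : ℕ) : Torus2 N := (1, 0)
def e₂ (N : ℕ) : Torus2 N := (0, 1)

/-- Discrete Laplacian on functions of configurations. -/
def Lf (φ : (Torus2 N → Bool) → ℝ) : (Torus2 N → Bool) → ℝ :=
  fun η => 4 * φ η - φ (trC (e₁ N) η) - φ (trC (-e₁ N) η)
    - φ (trC (e₂ N) η) - φ (trC (-e₂ N) η)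

section NZ
variable [NeZero N]

/-- Averaging projector. -/
noncomputable def Pf (φ : (Torus2 N → Bool) → ℝ) : (Torus2 N → Bool) → ℝ :=
  fun η => ((N : ℝ) ^ 2)⁻¹ * ∑ z : Torus2 N, φ (trC z η)

lemma cardT : (Fintype.card (Torus2 N) : ℝ) = (N : ℝ) ^ 2 := by
  simp [Fintype.card_prod, ZMod.card]; ring

lemma N2_ne : ((N : ℝ) ^ 2) ≠ 0 := by
  have := NeZero.ne N
  positivity

/-- reindexing sum over configurations by a translation -/
lemma sum_trC (z : Torus2 N) (F : (Torus2 N → Bool) → ℝ) :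
    ∑ η : Torus2 N → Bool, F (trC z η) = ∑ η : Torus2 N → Bool, F η := by
  refine Fintype.sum_equiv ⟨trC z, trC (-z), fun η => by simp, fun η => by simp⟩ _ _ (fun η => rfl)

/-- reindexing inner torus sums -/
lemma sum_shift_inner (u : (Torus2 N → Bool) → ℝ) (e : Torus2 N) (η : Torus2 N → Bool) :
    ∑ z : Torus2 N, u (trC e (trC z η)) = ∑ z : Torus2 N, u (trC z η) := by
  simp only [trC_trC]
  exact Fintype.sum_equiv (Equiv.addRight e) _ _ (fun z => rfl)

lemma Pf_shift (φ : (Torus2 N → Bool) → ℝ) (w : Torus2 N) (η : Torus2 N → Bool) :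
    Pf φ (trC w η) = Pf φ η := by
  unfold Pf
  congr 1
  simp only [trC_trC]
  exact Fintype.sum_equiv (Equiv.addLeft w) _ _ (fun z => by simp [Equiv.addLeft])

lemma Pf_inv_eq (φ : (Torus2 N → Bool) → ℝ) (hinv : ∀ (z : Torus2 N) η, φ (trC z η) = φ η)
    (η : Torus2 N → Bool) : Pf φ η = φ η := by
  unfold Pf
  rw [Finset.sum_congr rfl (fun z _ => hinv z η), Finset.sum_const, Finset.card_univ,
    nsmul_eq_mul, cardT]
  rw [← mul_assoc, inv_mul_cancel₀ N2_ne, one_mul]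

lemma sum_mul_Lf (φ : (Torus2 N → Bool) → ℝ) :
    ∑ η : Torus2 N → Bool, φ η * Lf φ η
      = (∑ η : Torus2 N → Bool, (φ η - φ (trC (-e₁ N) η)) ^ 2)
        + (∑ η : Torus2 N → Bool, (φ η - φ (trC (-e₂ N) η)) ^ 2) := by
  have r1 : ∀ e : Torus2 N, ∑ η : Torus2 N → Bool, φ (trC e η) ^ 2
      = ∑ η : Torus2 N → Bool, φ η ^ 2 := fun e => sum_trC e (fun η => φ η ^ 2)
  have r2 : ∀ e : Torus2 N, ∑ η : Torus2 N → Bool, φ η * φ (trC e η)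
      = ∑ η : Torus2 N → Bool, φ η * φ (trC (-e) η) := by
    intro e
    have := sum_trC (-e) (fun η => φ η * φ (trC e η))
    simp only [trC_trC, neg_add_cancel, trC_zero] at this
    calc ∑ η : Torus2 N → Bool, φ η * φ (trC e η)
        = ∑ η : Torus2 N → Bool, φ (trC (-e) η) * φ η := this.symm
      _ = _ := by exact Finset.sum_congr rfl (fun η _ => by ring)
  have expand : ∀ η : Torus2 N → Bool, φ η * Lf φ η
      = ((φ η - φ (trC (-e₁ N) η)) ^ 2 + (φ η - φ (trC (-e₂ N) η)) ^ 2)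
        + ((φ η * φ (trC (-e₁ N) η) - φ η * φ (trC (e₁ N) η))
        + (φ η * φ (trC (-e₂ N) η) - φ η * φ (trC (e₂ N) η))
        + ((φ η ^ 2 - φ (trC (-e₁ N) η) ^ 2) + (φ η ^ 2 - φ (trC (-e₂ N) η) ^ 2))) := by
    intro η; simp only [Lf]; ring
  rw [Finset.sum_congr rfl (fun η _ => expand η)]
  simp only [Finset.sum_add_distrib, Finset.sum_sub_distrib]
  rw [r1 (-e₁ N), r1 (-e₂ N), r2 (e₁ N), r2 (e₂ N)]
  ring

lemma sum_mul_Pf (φ : (Torus2 N → Bool) → ℝ) :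
    ∑ η : Torus2 N → Bool, φ η * Pf φ η = ∑ η : Torus2 N → Bool, (Pf φ η) ^ 2 := by
  have inner : ∀ z : Torus2 N, ∑ η : Torus2 N → Bool, Pf φ η * φ (trC z η)
      = ∑ η : Torus2 N → Bool, Pf φ η * φ η := by
    intro z
    have := sum_trC (-z) (fun η => Pf φ η * φ (trC z η))
    simp only [trC_trC, neg_add_cancel, trC_zero] at this
    rw [← this]
    exact Finset.sum_congr rfl (fun η _ => by rw [Pf_shift])
  symm
  calc ∑ η : Torus2 N → Bool, (Pf φ η) ^ 2
      = ∑ η : Torus2 N → Bool, Pf φ η * (((N : ℝ) ^ 2)⁻¹ * ∑ z : Torus2 N, φ (trC z η)) := by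
        exact Finset.sum_congr rfl (fun η _ => by rw [pow_two]; rfl)
    _ = ((N : ℝ) ^ 2)⁻¹ * ∑ η : Torus2 N → Bool, ∑ z : Torus2 N, Pf φ η * φ (trC z η) := by
        rw [Finset.mul_sum]
        refine Finset.sum_congr rfl (fun η _ => ?_)
        simp only [Finset.mul_sum]
        exact Finset.sum_congr rfl (fun z _ => by ring)
    _ = ((N : ℝ) ^ 2)⁻¹ * ∑ z : Torus2 N, ∑ η : Torus2 N → Bool, Pf φ η * φ (trC z η) := by
        rw [Finset.sum_comm]
    _ = ((N : ℝ) ^ 2)⁻¹ * ∑ z : Torus2 N, ∑ η : Torus2 N → Bool, Pf φ η * φ η := by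
        rw [Finset.sum_congr rfl (fun z _ => inner z)]
    _ = ∑ η : Torus2 N → Bool, φ η * Pf φ η := by
        rw [Finset.sum_const, Finset.card_univ, nsmul_eq_mul, cardT, ← mul_assoc,
          inv_mul_cancel₀ N2_ne, one_mul]
        exact Finset.sum_congr rfl (fun η _ => by ring)


/-- invariance under the two generators gives full translation invariance -/
lemma invariance (φ : (Torus2 N → Bool) → ℝ)
    (h1 : ∀ η, φ (trC (e₁ N) η) = φ η) (h2 : ∀ η, φ (trC (e₂ N) η) = φ η) :
    ∀ (z : Torus2 N) (η : Torus2 N → Bool), φ (trC z η) = φ η := by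
  have key : ∀ (m n : ℕ) (η : Torus2 N → Bool),
      φ (trC (((m : ZMod N), (n : ZMod N)) : Torus2 N) η) = φ η := by
    intro m
    induction m with
    | zero =>
      intro n
      induction n with
      | zero => intro η; norm_num; exact congrArg φ (trC_zero η)
      | succ n ih =>
        intro η
        have hs : ((((0 : ℕ) : ZMod N), ((n + 1 : ℕ) : ZMod N)) : Torus2 N)
            = ((((0 : ℕ) : ZMod N), ((n : ℕ) : ZMod N)) : Torus2 N) + e₂ N := by
          simp [e₂, Prod.ext_iff]
        rw [hs, ← trC_trC, h2, ih]
    | succ m ih =>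
      intro n η
      have hs : ((((m + 1 : ℕ) : ZMod N), ((n : ℕ) : ZMod N)) : Torus2 N)
          = ((((m : ℕ) : ZMod N), ((n : ℕ) : ZMod N)) : Torus2 N) + e₁ N := by
        simp [e₁, Prod.ext_iff]
      rw [hs, ← trC_trC, h1, ih]
  intro z η
  have hz : ((((z.1.val : ℕ) : ZMod N), ((z.2.val : ℕ) : ZMod N)) : Torus2 N) = z := by
    simp [ZMod.natCast_val, ZMod.cast_id]
  rw [← hz]
  exact key _ _ η

lemma inv_of_neg_step (φ : (Torus2 N → Bool) → ℝ) (e : Torus2 N)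
    (h : ∀ η, φ (trC (-e) η) = φ η) : ∀ η, φ (trC e η) = φ η := by
  intro η
  have := h (trC e η)
  simpa using this.symm

/-- The regularized Laplacian `L + P`, as a linear map. -/
noncomputable def Kmap (N : ℕ) [NeZero N] :
    ((Torus2 N → Bool) → ℝ) →ₗ[ℝ] ((Torus2 N → Bool) → ℝ) where
  toFun φ := fun η => Lf φ η + Pf φ η
  map_add' φ ψ := by
    funext η
    simp only [Lf, Pf, Pi.add_apply, Finset.sum_add_distrib, mul_add]
    ring
  map_smul' c φ := by
    funext η
    simp only [Lf, Pf, Pi.smul_apply, smul_eq_mul, RingHom.id_apply]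
    have : ∑ z : Torus2 N, c * φ (trC z η) = c * ∑ z : Torus2 N, φ (trC z η) := by
      rw [Finset.mul_sum]
    rw [this]
    ring

lemma K_inj : Function.Injective (Kmap N) := by
  have h0 : ∀ φ : (Torus2 N → Bool) → ℝ, Kmap N φ = 0 → φ = 0 := by
    intro φ hφ
    have hpt : ∀ η, Lf φ η + Pf φ η = 0 := fun η => congrFun hφ η
    have hsum : (∑ η : Torus2 N → Bool, φ η * Lf φ η)
        + ∑ η : Torus2 N → Bool, φ η * Pf φ η = 0 := by
      rw [← Finset.sum_add_distrib]
      refine Finset.sum_eq_zero (fun η _ => ?_)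
      rw [← mul_add, hpt η, mul_zero]
    rw [sum_mul_Lf, sum_mul_Pf] at hsum
    have hA : ∑ η : Torus2 N → Bool, (φ η - φ (trC (-e₁ N) η)) ^ 2 = 0 := by
      have n1 : (0:ℝ) ≤ ∑ η : Torus2 N → Bool, (φ η - φ (trC (-e₁ N) η)) ^ 2 :=
        Finset.sum_nonneg (fun η _ => sq_nonneg _)
      have n2 : (0:ℝ) ≤ ∑ η : Torus2 N → Bool, (φ η - φ (trC (-e₂ N) η)) ^ 2 :=
        Finset.sum_nonneg (fun η _ => sq_nonneg _)
      have n3 : (0:ℝ) ≤ ∑ η : Torus2 N → Bool, (Pf φ η) ^ 2 :=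
        Finset.sum_nonneg (fun η _ => sq_nonneg _)
      linarith
    have hB : ∑ η : Torus2 N → Bool, (φ η - φ (trC (-e₂ N) η)) ^ 2 = 0 := by
      have n1 : (0:ℝ) ≤ ∑ η : Torus2 N → Bool, (φ η - φ (trC (-e₁ N) η)) ^ 2 :=
        Finset.sum_nonneg (fun η _ => sq_nonneg _)
      have n3 : (0:ℝ) ≤ ∑ η : Torus2 N → Bool, (Pf φ η) ^ 2 :=
        Finset.sum_nonneg (fun η _ => sq_nonneg _)
      have n2 : (0:ℝ) ≤ ∑ η : Torus2 N → Bool, (φ η - φ (trC (-e₂ N) η)) ^ 2 :=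
        Finset.sum_nonneg (fun η _ => sq_nonneg _)
      linarith
    have hC : ∑ η : Torus2 N → Bool, (Pf φ η) ^ 2 = 0 := by
      have n1 : (0:ℝ) ≤ ∑ η : Torus2 N → Bool, (φ η - φ (trC (-e₁ N) η)) ^ 2 :=
        Finset.sum_nonneg (fun η _ => sq_nonneg _)
      have n2 : (0:ℝ) ≤ ∑ η : Torus2 N → Bool, (φ η - φ (trC (-e₂ N) η)) ^ 2 :=
        Finset.sum_nonneg (fun η _ => sq_nonneg _)
      have n3 : (0:ℝ) ≤ ∑ η : Torus2 N → Bool, (Pf φ η) ^ 2 :=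
        Finset.sum_nonneg (fun η _ => sq_nonneg _)
      linarith
    have sqz : ∀ (F : (Torus2 N → Bool) → ℝ),
        (∑ η : Torus2 N → Bool, (F η) ^ 2 = 0) → ∀ η, F η = 0 := by
      intro F hF η
      have := (Finset.sum_eq_zero_iff_of_nonneg
        (fun η _ => sq_nonneg (F η))).mp hF η (Finset.mem_univ η)
      exact pow_eq_zero_iff (by norm_num) |>.mp this
    have s1 : ∀ η, φ (trC (-e₁ N) η) = φ η := fun η =>
      (sub_eq_zero.mp (sqz _ hA η)).symm
    have s2 : ∀ η, φ (trC (-e₂ N) η) = φ η := fun η =>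
      (sub_eq_zero.mp (sqz _ hB η)).symm
    have hinv := invariance φ (inv_of_neg_step φ _ s1) (inv_of_neg_step φ _ s2)
    have : ∀ η, Pf φ η = 0 := sqz _ hC
    funext η
    have := this η
    rw [Pf_inv_eq φ hinv η] at this
    exact this
  intro a b hab
  have := h0 (a - b) (by rw [map_sub, hab, sub_self])
  have h' : a - b = 0 := this
  funext η
  have := congrFun h' η
  simpa [sub_eq_zero] using this

lemma K_surj : Function.Surjective (Kmap N) :=
  (LinearMap.injective_iff_surjective).mp K_inj

/-- Lf kills translation invariance: if Lφ = 0 then φ is translation invariant. -/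
lemma Lf_zero_inv (φ : (Torus2 N → Bool) → ℝ) (h : ∀ η, Lf φ η = 0) :
    ∀ (z : Torus2 N) (η : Torus2 N → Bool), φ (trC z η) = φ η := by
  have hsum : (∑ η : Torus2 N → Bool, (φ η - φ (trC (-e₁ N) η)) ^ 2)
      + ∑ η : Torus2 N → Bool, (φ η - φ (trC (-e₂ N) η)) ^ 2 = 0 := by
    rw [← sum_mul_Lf]
    exact Finset.sum_eq_zero (fun η _ => by rw [h η, mul_zero])
  have n1 : (0:ℝ) ≤ ∑ η : Torus2 N → Bool, (φ η - φ (trC (-e₁ N) η)) ^ 2 :=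
    Finset.sum_nonneg (fun η _ => sq_nonneg _)
  have n2 : (0:ℝ) ≤ ∑ η : Torus2 N → Bool, (φ η - φ (trC (-e₂ N) η)) ^ 2 :=
    Finset.sum_nonneg (fun η _ => sq_nonneg _)
  have hA : ∑ η : Torus2 N → Bool, (φ η - φ (trC (-e₁ N) η)) ^ 2 = 0 := by linarith
  have hB : ∑ η : Torus2 N → Bool, (φ η - φ (trC (-e₂ N) η)) ^ 2 = 0 := by linarith
  have sqz : ∀ (F : (Torus2 N → Bool) → ℝ),
      (∑ η : Torus2 N → Bool, (F η) ^ 2 = 0) → ∀ η, F η = 0 := by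
    intro F hF η
    have := (Finset.sum_eq_zero_iff_of_nonneg
      (fun η _ => sq_nonneg (F η))).mp hF η (Finset.mem_univ η)
    exact pow_eq_zero_iff (by norm_num) |>.mp this
  have s1 : ∀ η, φ (trC (-e₁ N) η) = φ η := fun η => (sub_eq_zero.mp (sqz _ hA η)).symm
  have s2 : ∀ η, φ (trC (-e₂ N) η) = φ η := fun η => (sub_eq_zero.mp (sqz _ hB η)).symm
  exact invariance φ (inv_of_neg_step φ _ s1) (inv_of_neg_step φ _ s2)


lemma sum_Lf (φ : (Torus2 N → Bool) → ℝ) (η : Torus2 N → Bool) :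
    ∑ z : Torus2 N, Lf φ (trC z η) = 0 := by
  simp only [Lf, Finset.sum_sub_distrib]
  rw [sum_shift_inner φ (e₁ N) η, sum_shift_inner φ (-e₁ N) η,
    sum_shift_inner φ (e₂ N) η, sum_shift_inner φ (-e₂ N) η, ← Finset.mul_sum]
  ring

lemma sum_Pf (φ : (Torus2 N → Bool) → ℝ) (η : Torus2 N → Bool) :
    ∑ z : Torus2 N, Pf φ (trC z η) = (N : ℝ) ^ 2 * Pf φ η := by
  rw [Finset.sum_congr rfl (fun z _ => Pf_shift φ z η), Finset.sum_const,
    Finset.card_univ, nsmul_eq_mul, cardT]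

lemma Pf_K (φ : (Torus2 N → Bool) → ℝ) (η : Torus2 N → Bool) :
    Pf (fun ζ => Lf φ ζ + Pf φ ζ) η = Pf φ η := by
  show ((N : ℝ) ^ 2)⁻¹ * ∑ z : Torus2 N, (Lf φ (trC z η) + Pf φ (trC z η)) = Pf φ η
  rw [Finset.sum_add_distrib, sum_Lf, sum_Pf, zero_add, ← mul_assoc,
    inv_mul_cancel₀ N2_ne, one_mul]

lemma comb1 (h g u : (Torus2 N → Bool) → ℝ) (η : Torus2 N → Bool) :
    Lf (fun ζ => h (trC (-e₁ N) ζ) - h ζ + (g ζ - g (trC (e₂ N) ζ)) - u ζ) η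
      = (Lf h (trC (-e₁ N) η) - Lf h η) + (Lf g η - Lf g (trC (e₂ N) η)) - Lf u η := by
  simp only [Lf, trC_trC]; ring_nf

lemma comb2 (h g u : (Torus2 N → Bool) → ℝ) (η : Torus2 N → Bool) :
    Lf (fun ζ => h (trC (-e₂ N) ζ) - h ζ + (g (trC (e₁ N) ζ) - g ζ) - u ζ) η
      = (Lf h (trC (-e₂ N) η) - Lf h η) + (Lf g (trC (e₁ N) η) - Lf g η) - Lf u η := by
  simp only [Lf, trC_trC]; ring_nf

lemma ident1 (u₁ u₂ : (Torus2 N → Bool) → ℝ) (η : Torus2 N → Bool) :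
    ((u₁ (trC (e₁ N) (trC (-e₁ N) η)) - u₁ (trC (-e₁ N) η))
        + (u₂ (trC (e₂ N) (trC (-e₁ N) η)) - u₂ (trC (-e₁ N) η)))
      - ((u₁ (trC (e₁ N) η) - u₁ η) + (u₂ (trC (e₂ N) η) - u₂ η))
      + (((u₁ η - u₁ (trC (-e₂ N) η)) + (u₂ (trC (-e₁ N) η) - u₂ η))
        - ((u₁ (trC (e₂ N) η) - u₁ (trC (-e₂ N) (trC (e₂ N) η)))
          + (u₂ (trC (-e₁ N) (trC (e₂ N) η)) - u₂ (trC (e₂ N) η))))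
      = Lf u₁ η := by
  simp only [Lf, trC_trC]; ring_nf; simp only [trC_zero]; ring

lemma ident2 (u₁ u₂ : (Torus2 N → Bool) → ℝ) (η : Torus2 N → Bool) :
    ((u₁ (trC (e₁ N) (trC (-e₂ N) η)) - u₁ (trC (-e₂ N) η))
        + (u₂ (trC (e₂ N) (trC (-e₂ N) η)) - u₂ (trC (-e₂ N) η)))
      - ((u₁ (trC (e₁ N) η) - u₁ η) + (u₂ (trC (e₂ N) η) - u₂ η))
      + (((u₁ (trC (e₁ N) η) - u₁ (trC (-e₂ N) (trC (e₁ N) η)))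
          + (u₂ (trC (-e₁ N) (trC (e₁ N) η)) - u₂ (trC (e₁ N) η)))
        - ((u₁ η - u₁ (trC (-e₂ N) η)) + (u₂ (trC (-e₁ N) η) - u₂ η)))
      = Lf u₂ η := by
  simp only [Lf, trC_trC]; ring_nf; simp only [trC_zero]; ring

lemma ident3 (p q : (Torus2 N → Bool) → ℝ) (η : Torus2 N → Bool) :
    ((p (trC (-e₁ N) (trC (e₁ N) η)) - p (trC (e₁ N) η)
        + (q (trC (e₁ N) η) - q (trC (e₂ N) (trC (e₁ N) η))))
      - (p (trC (-e₁ N) η) - p η + (q η - q (trC (e₂ N) η))))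
      + ((p (trC (-e₂ N) (trC (e₂ N) η)) - p (trC (e₂ N) η)
        + (q (trC (e₁ N) (trC (e₂ N) η)) - q (trC (e₂ N) η)))
      - (p (trC (-e₂ N) η) - p η + (q (trC (e₁ N) η) - q η)))
      = Lf p η := by
  simp only [Lf, trC_trC]; ring_nf; simp only [trC_zero]; ring

lemma ident4 (p q : (Torus2 N → Bool) → ℝ) (η : Torus2 N → Bool) :
    ((p (trC (-e₁ N) η) - p η + (q η - q (trC (e₂ N) η)))
      - (p (trC (-e₁ N) (trC (-e₂ N) η)) - p (trC (-e₂ N) η)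
        + (q (trC (-e₂ N) η) - q (trC (e₂ N) (trC (-e₂ N) η)))))
      + ((p (trC (-e₂ N) (trC (-e₁ N) η)) - p (trC (-e₁ N) η)
        + (q (trC (e₁ N) (trC (-e₁ N) η)) - q (trC (-e₁ N) η)))
      - (p (trC (-e₂ N) η) - p η + (q (trC (e₁ N) η) - q η)))
      = Lf q η := by
  simp only [Lf, trC_trC]; ring_nf; simp only [trC_zero]; ring

lemma sum_of_Pf_zero (u : (Torus2 N → Bool) → ℝ) (η : Torus2 N → Bool)
    (hu : Pf u η = 0) : ∑ z : Torus2 N, u (trC z η) = 0 := by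
  unfold Pf at hu
  rcases mul_eq_zero.mp hu with h | h
  · exact absurd h (inv_ne_zero N2_ne)
  · exact h

lemma Pf_w1_zero (u₁ u₂ : (Torus2 N → Bool) → ℝ) (a b : Torus2 N) (η : Torus2 N → Bool) :
    Pf (fun ζ => (u₁ (trC a ζ) - u₁ ζ) + (u₂ (trC b ζ) - u₂ ζ)) η = 0 := by
  show ((N : ℝ) ^ 2)⁻¹ * ∑ z : Torus2 N,
    ((u₁ (trC a (trC z η)) - u₁ (trC z η)) + (u₂ (trC b (trC z η)) - u₂ (trC z η))) = 0
  rw [Finset.sum_add_distrib, Finset.sum_sub_distrib, Finset.sum_sub_distrib,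
    sum_shift_inner u₁ a η, sum_shift_inner u₂ b η]
  simp

lemma Pf_w2_zero (u₁ u₂ : (Torus2 N → Bool) → ℝ) (a b : Torus2 N) (η : Torus2 N → Bool) :
    Pf (fun ζ => (u₁ ζ - u₁ (trC a ζ)) + (u₂ (trC b ζ) - u₂ ζ)) η = 0 := by
  show ((N : ℝ) ^ 2)⁻¹ * ∑ z : Torus2 N,
    ((u₁ (trC z η) - u₁ (trC a (trC z η))) + (u₂ (trC b (trC z η)) - u₂ (trC z η))) = 0
  rw [Finset.sum_add_distrib, Finset.sum_sub_distrib, Finset.sum_sub_distrib,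
    sum_shift_inner u₁ a η, sum_shift_inner u₂ b η]
  simp

lemma Pf_r1_zero (h g u : (Torus2 N → Bool) → ℝ) (a b : Torus2 N) (η : Torus2 N → Bool)
    (hu : Pf u η = 0) :
    Pf (fun ζ => h (trC a ζ) - h ζ + (g ζ - g (trC b ζ)) - u ζ) η = 0 := by
  show ((N : ℝ) ^ 2)⁻¹ * ∑ z : Torus2 N,
    (h (trC a (trC z η)) - h (trC z η) + (g (trC z η) - g (trC b (trC z η))) - u (trC z η)) = 0
  rw [Finset.sum_sub_distrib, Finset.sum_add_distrib, Finset.sum_sub_distrib,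
    Finset.sum_sub_distrib, sum_shift_inner h a η, sum_shift_inner g b η,
    sum_of_Pf_zero u η hu]
  simp

lemma Pf_r2_zero (h g u : (Torus2 N → Bool) → ℝ) (a b : Torus2 N) (η : Torus2 N → Bool)
    (hu : Pf u η = 0) :
    Pf (fun ζ => h (trC a ζ) - h ζ + (g (trC b ζ) - g ζ) - u ζ) η = 0 := by
  show ((N : ℝ) ^ 2)⁻¹ * ∑ z : Torus2 N,
    (h (trC a (trC z η)) - h (trC z η) + (g (trC b (trC z η)) - g (trC z η)) - u (trC z η)) = 0
  rw [Finset.sum_sub_distrib, Finset.sum_add_distrib, Finset.sum_sub_distrib,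
    Finset.sum_sub_distrib, sum_shift_inner h a η, sum_shift_inner g b η,
    sum_of_Pf_zero u η hu]
  simp

lemma sum_shift_torus (f : Torus2 N → ℝ) (z : Torus2 N) :
    ∑ x : Torus2 N, f (x + z) = ∑ x : Torus2 N, f x :=
  Fintype.sum_equiv (Equiv.addRight z) _ _ (fun x => rfl)

lemma sum_sub_torus (f : Torus2 N → ℝ) (z : Torus2 N) :
    ∑ x : Torus2 N, f (x - z) = ∑ x : Torus2 N, f x :=
  Fintype.sum_equiv (Equiv.subRight z) _ _ (fun x => rfl)

lemma sum_neg_torus (f : Torus2 N → ℝ) :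
    ∑ x : Torus2 N, f (-x) = ∑ x : Torus2 N, f x :=
  Fintype.sum_equiv (Equiv.neg _) _ _ (fun x => rfl)

end NZ
end FHD

open FHD in
/-- 2d functional Hodge decomposition: every translational
covariant discrete vector field `j` on `ℤ_N²` decomposes as
`j_η(e) = [τ_{e⁺}h − τ_{e⁻}h] + [τ_{𝔣⁺(e)}g − τ_{𝔣⁻(e)}g] ± C⁽ⁱ⁾`, with the
`C⁽ⁱ⁾` translational invariant, uniquely determined and equal to
`(1/N²) Σ_x j_η(x, x+e⁽ⁱ⁾)`, while `h` and `g` are unique up to additive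
translational invariant functions. -/
theorem functional_hodge_decomposition_2d
    (N : ℕ) [NeZero N]
    (j : (Torus2 N → Bool) → Torus2 N → Torus2 N → ℝ)
    (hanti : ∀ η x y, j η y x = -j η x y)
    (hcov : ∀ (η : Torus2 N → Bool) (z x y : Torus2 N),
      j η x y = j (trC z η) (x + z) (y + z)) :
    ∃ h g C₁ C₂ : (Torus2 N → Bool) → ℝ,
      (∀ (η : Torus2 N → Bool) (z : Torus2 N), C₁ (trC z η) = C₁ η)
      ∧ (∀ (η : Torus2 N → Bool) (z : Torus2 N), C₂ (trC z η) = C₂ η)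
      ∧ (∀ η, C₁ η = (1 / (N : ℝ) ^ 2) * ∑ x : Torus2 N, j η x (x + (1, 0)))
      ∧ (∀ η, C₂ η = (1 / (N : ℝ) ^ 2) * ∑ x : Torus2 N, j η x (x + (0, 1)))
      ∧ hodgeEqs j h g C₁ C₂
      ∧ (∀ h' g' C₁' C₂' : (Torus2 N → Bool) → ℝ,
          hodgeEqs j h' g' C₁' C₂' →
            (∀ η, C₁' η = C₁ η ∧ C₂' η = C₂ η)
            ∧ (∀ (η : Torus2 N → Bool) (z : Torus2 N),
                h (trC z η) - h' (trC z η) = h η - h' η)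
            ∧ (∀ (η : Torus2 N → Bool) (z : Torus2 N),
                g (trC z η) - g' (trC z η) = g η - g' η)) := by
  classical
  set C₁ : (Torus2 N → Bool) → ℝ :=
    fun η => (1 / (N : ℝ) ^ 2) * ∑ x : Torus2 N, j η x (x + (1, 0)) with hC₁def
  set C₂ : (Torus2 N → Bool) → ℝ :=
    fun η => (1 / (N : ℝ) ^ 2) * ∑ x : Torus2 N, j η x (x + (0, 1)) with hC₂def
  -- translation invariance of C₁, C₂
  have hC₁inv : ∀ (η : Torus2 N → Bool) (z : Torus2 N), C₁ (trC z η) = C₁ η := by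
    intro η z
    show (1 / (N : ℝ) ^ 2) * ∑ x : Torus2 N, j (trC z η) x (x + (1, 0))
      = (1 / (N : ℝ) ^ 2) * ∑ x : Torus2 N, j η x (x + (1, 0))
    congr 1
    have step : ∀ x : Torus2 N, j (trC z η) x (x + (1, 0)) = j η (x - z) (x - z + (1, 0)) := by
      intro x
      rw [hcov η z (x - z) (x - z + (1, 0))]
      congr 1 <;> ring
    rw [Finset.sum_congr rfl (fun x _ => step x)]
    exact Fintype.sum_equiv (Equiv.subRight z) _ _ (fun x => rfl)
  have hC₂inv : ∀ (η : Torus2 N → Bool) (z : Torus2 N), C₂ (trC z η) = C₂ η := by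
    intro η z
    show (1 / (N : ℝ) ^ 2) * ∑ x : Torus2 N, j (trC z η) x (x + (0, 1))
      = (1 / (N : ℝ) ^ 2) * ∑ x : Torus2 N, j η x (x + (0, 1))
    congr 1
    have step : ∀ x : Torus2 N, j (trC z η) x (x + (0, 1)) = j η (x - z) (x - z + (0, 1)) := by
      intro x
      rw [hcov η z (x - z) (x - z + (0, 1))]
      congr 1 <;> ring
    rw [Finset.sum_congr rfl (fun x _ => step x)]
    exact Fintype.sum_equiv (Equiv.subRight z) _ _ (fun x => rfl)
  -- the mean-zero single-edge currents
  set u₁ : (Torus2 N → Bool) → ℝ := fun ζ => j ζ 0 ((1, 0)) - C₁ ζ with hu₁def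
  set u₂ : (Torus2 N → Bool) → ℝ := fun ζ => j ζ 0 ((0, 1)) - C₂ ζ with hu₂def
  have hPu₁ : ∀ η, Pf u₁ η = 0 := by
    intro η
    show ((N : ℝ) ^ 2)⁻¹ * ∑ z : Torus2 N, (j (trC z η) 0 ((1, 0)) - C₁ (trC z η)) = 0
    have step : ∀ z : Torus2 N, j (trC z η) 0 ((1, 0)) = j η (-z) (-z + (1, 0)) := by
      intro z
      rw [hcov η z (-z) (-z + (1, 0))]
      congr 1 <;> ring
    rw [Finset.sum_congr rfl (fun z _ => by rw [step z, hC₁inv η z])]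
    rw [Finset.sum_sub_distrib, Finset.sum_const, Finset.card_univ, nsmul_eq_mul, cardT]
    have hre : ∑ z : Torus2 N, j η (-z) (-z + (1, 0)) = ∑ x : Torus2 N, j η x (x + (1, 0)) :=
      sum_neg_torus (fun x => j η x (x + (1, 0)))
    have hCval : (N : ℝ) ^ 2 * C₁ η = ∑ x : Torus2 N, j η x (x + (1, 0)) := by
      simp only [hC₁def]
      rw [one_div, ← mul_assoc, mul_inv_cancel₀ N2_ne, one_mul]
    rw [hre, hCval, sub_self, mul_zero]
  have hPu₂ : ∀ η, Pf u₂ η = 0 := by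
    intro η
    show ((N : ℝ) ^ 2)⁻¹ * ∑ z : Torus2 N, (j (trC z η) 0 ((0, 1)) - C₂ (trC z η)) = 0
    have step : ∀ z : Torus2 N, j (trC z η) 0 ((0, 1)) = j η (-z) (-z + (0, 1)) := by
      intro z
      rw [hcov η z (-z) (-z + (0, 1))]
      congr 1 <;> ring
    rw [Finset.sum_congr rfl (fun z _ => by rw [step z, hC₂inv η z])]
    rw [Finset.sum_sub_distrib, Finset.sum_const, Finset.card_univ, nsmul_eq_mul, cardT]
    have hre : ∑ z : Torus2 N, j η (-z) (-z + (0, 1)) = ∑ x : Torus2 N, j η x (x + (0, 1)) :=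
      sum_neg_torus (fun x => j η x (x + (0, 1)))
    have hCval : (N : ℝ) ^ 2 * C₂ η = ∑ x : Torus2 N, j η x (x + (0, 1)) := by
      simp only [hC₂def]
      rw [one_div, ← mul_assoc, mul_inv_cancel₀ N2_ne, one_mul]
    rw [hre, hCval, sub_self, mul_zero]
  -- right-hand sides for the regularized Laplace equations
  set w₁ : (Torus2 N → Bool) → ℝ :=
    fun ζ => (u₁ (trC (e₁ N) ζ) - u₁ ζ) + (u₂ (trC (e₂ N) ζ) - u₂ ζ) with hw₁def
  set w₂ : (Torus2 N → Bool) → ℝ :=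
    fun ζ => (u₁ ζ - u₁ (trC (-e₂ N) ζ)) + (u₂ (trC (-e₁ N) ζ) - u₂ ζ) with hw₂def
  have hPw₁ : ∀ η, Pf w₁ η = 0 := by
    intro η
    rw [hw₁def]
    exact Pf_w1_zero u₁ u₂ (e₁ N) (e₂ N) η
  have hPw₂ : ∀ η, Pf w₂ η = 0 := by
    intro η
    rw [hw₂def]
    exact Pf_w2_zero u₁ u₂ (-e₂ N) (-e₁ N) η
  -- solve the regularized equations
  obtain ⟨h, hh⟩ := K_surj (N := N) w₁
  obtain ⟨g, hg⟩ := K_surj (N := N) w₂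
  have hKh : ∀ η, Lf h η + Pf h η = w₁ η := fun η => congrFun hh η
  have hKg : ∀ η, Lf g η + Pf g η = w₂ η := fun η => congrFun hg η
  have hPh : ∀ η, Pf h η = 0 := by
    intro η
    calc Pf h η = Pf (fun ζ => Lf h ζ + Pf h ζ) η := (Pf_K h η).symm
      _ = Pf w₁ η := by rw [funext hKh]
      _ = 0 := hPw₁ η
  have hPg : ∀ η, Pf g η = 0 := by
    intro η
    calc Pf g η = Pf (fun ζ => Lf g ζ + Pf g ζ) η := (Pf_K g η).symm
      _ = Pf w₂ η := by rw [funext hKg]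
      _ = 0 := hPw₂ η
  have hLh : ∀ η, Lf h η = w₁ η := by intro η; have := hKh η; have := hPh η; linarith
  have hLg : ∀ η, Lf g η = w₂ η := by intro η; have := hKg η; have := hPg η; linarith
  -- the residues vanish
  set r₁ : (Torus2 N → Bool) → ℝ :=
    fun ζ => h (trC (-e₁ N) ζ) - h ζ + (g ζ - g (trC (e₂ N) ζ)) - u₁ ζ with hr₁def
  set r₂ : (Torus2 N → Bool) → ℝ :=
    fun ζ => h (trC (-e₂ N) ζ) - h ζ + (g (trC (e₁ N) ζ) - g ζ) - u₂ ζ with hr₂def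
  have hLr₁ : ∀ η, Lf r₁ η = 0 := by
    intro η
    rw [hr₁def, comb1 h g u₁ η]
    simp only [hLh, hLg, hw₁def, hw₂def]
    have hi := ident1 u₁ u₂ η
    linarith
  have hLr₂ : ∀ η, Lf r₂ η = 0 := by
    intro η
    rw [hr₂def, comb2 h g u₂ η]
    simp only [hLh, hLg, hw₁def, hw₂def]
    have hi := ident2 u₁ u₂ η
    linarith
  have hPr₁ : ∀ η, Pf r₁ η = 0 := by
    intro η
    rw [hr₁def]
    exact Pf_r1_zero h g u₁ (-e₁ N) (e₂ N) η (hPu₁ η)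
  have hPr₂ : ∀ η, Pf r₂ η = 0 := by
    intro η
    rw [hr₂def]
    exact Pf_r2_zero h g u₂ (-e₂ N) (e₁ N) η (hPu₂ η)
  have hr₁ : ∀ ζ, r₁ ζ = 0 := by
    intro ζ
    rw [← Pf_inv_eq r₁ (Lf_zero_inv r₁ hLr₁) ζ]
    exact hPr₁ ζ
  have hr₂ : ∀ ζ, r₂ ζ = 0 := by
    intro ζ
    rw [← Pf_inv_eq r₂ (Lf_zero_inv r₂ hLr₂) ζ]
    exact hPr₂ ζ
  -- the two master equations
  have E1 : ∀ ζ, j ζ 0 ((1, 0) : Torus2 N)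
      = h (trC (-e₁ N) ζ) - h ζ + (g ζ - g (trC (e₂ N) ζ)) + C₁ ζ := by
    intro ζ
    have := hr₁ ζ
    simp only [hr₁def, hu₁def] at this
    linarith
  have E2 : ∀ ζ, j ζ 0 ((0, 1) : Torus2 N)
      = h (trC (-e₂ N) ζ) - h ζ + (g (trC (e₁ N) ζ) - g ζ) + C₂ ζ := by
    intro ζ
    have := hr₂ ζ
    simp only [hr₂def, hu₂def] at this
    linarith
  -- the four hodge equations
  have heq1 : ∀ (η : Torus2 N → Bool) (x : Torus2 N),
      j η x (x + (1, 0))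
        = (h (trC (-(x + (1, 0))) η) - h (trC (-x) η))
          + (g (trC (-x) η) - g (trC (-(x - (0, 1))) η)) + C₁ η := by
    intro η x
    have hx : j η x (x + ((1, 0) : Torus2 N)) = j (trC (-x) η) 0 ((1, 0)) := by
      have := hcov η (-x) x (x + (1, 0))
      rw [show x + -x = (0 : Torus2 N) by ring,
        show x + (1, 0) + -x = ((1, 0) : Torus2 N) by ring] at this
      exact this
    rw [hx, E1 (trC (-x) η), hC₁inv η (-x)]
    simp only [trC_trC]
    rw [show -x + -e₁ N = -(x + (1, 0)) from by show -x + -(1,0) = _; ring,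
      show -x + e₂ N = -(x - (0, 1)) from by show -x + (0,1) = _; ring]
  have heq2 : ∀ (η : Torus2 N → Bool) (x : Torus2 N),
      j η x (x + (0, 1))
        = (h (trC (-(x + (0, 1))) η) - h (trC (-x) η))
          + (g (trC (-(x - (1, 0))) η) - g (trC (-x) η)) + C₂ η := by
    intro η x
    have hx : j η x (x + ((0, 1) : Torus2 N)) = j (trC (-x) η) 0 ((0, 1)) := by
      have := hcov η (-x) x (x + (0, 1))
      rw [show x + -x = (0 : Torus2 N) by ring,
        show x + (0, 1) + -x = ((0, 1) : Torus2 N) by ring] at this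
      exact this
    rw [hx, E2 (trC (-x) η), hC₂inv η (-x)]
    simp only [trC_trC]
    rw [show -x + -e₂ N = -(x + (0, 1)) from by show -x + -(0,1) = _; ring,
      show -x + e₁ N = -(x - (1, 0)) from by show -x + (1,0) = _; ring]
  have hodge : hodgeEqs j h g C₁ C₂ := by
    intro η x
    refine ⟨heq1 η x, heq2 η x, ?_, ?_⟩
    · have b := heq1 η (x - (1, 0))
      rw [show x - (1, 0) + ((1, 0) : Torus2 N) = x by ring] at b
      rw [hanti η (x - (1, 0)) x, b]
      ring
    · have b := heq2 η (x - (0, 1))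
      rw [show x - (0, 1) + ((0, 1) : Torus2 N) = x by ring,
        show x - (0, 1) - ((1, 0) : Torus2 N) = x - (1, 0) - (0, 1) by ring] at b
      rw [hanti η (x - (0, 1)) x, b]
      ring
  refine ⟨h, g, C₁, C₂, hC₁inv, hC₂inv, fun η => rfl, fun η => rfl, hodge, ?_⟩
  -- uniqueness
  intro h' g' C₁' C₂' H
  have hC₁' : ∀ η, C₁' η = C₁ η := by
    intro η
    have hs := Finset.sum_congr rfl (fun x (_ : x ∈ Finset.univ) => (H η x).1)
    have S1 : ∑ x : Torus2 N, h' (trC (-(x + (1, 0))) η) = ∑ x : Torus2 N, h' (trC (-x) η) :=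
      sum_shift_torus (fun x => h' (trC (-x) η)) ((1, 0))
    have S2 : ∑ x : Torus2 N, g' (trC (-(x - (0, 1))) η) = ∑ x : Torus2 N, g' (trC (-x) η) :=
      sum_sub_torus (fun x => g' (trC (-x) η)) ((0, 1))
    rw [Finset.sum_add_distrib, Finset.sum_add_distrib, Finset.sum_sub_distrib,
      Finset.sum_sub_distrib, S1, S2, Finset.sum_const, Finset.card_univ,
      nsmul_eq_mul, cardT] at hs
    have hs' : ∑ x : Torus2 N, j η x (x + (1, 0)) = (N : ℝ) ^ 2 * C₁' η := by
      rw [hs]; ring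
    simp only [hC₁def]
    rw [hs', one_div, ← mul_assoc, inv_mul_cancel₀ N2_ne, one_mul]
  have hC₂' : ∀ η, C₂' η = C₂ η := by
    intro η
    have hs := Finset.sum_congr rfl (fun x (_ : x ∈ Finset.univ) => (H η x).2.1)
    have S1 : ∑ x : Torus2 N, h' (trC (-(x + (0, 1))) η) = ∑ x : Torus2 N, h' (trC (-x) η) :=
      sum_shift_torus (fun x => h' (trC (-x) η)) ((0, 1))
    have S2 : ∑ x : Torus2 N, g' (trC (-(x - (1, 0))) η) = ∑ x : Torus2 N, g' (trC (-x) η) :=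
      sum_sub_torus (fun x => g' (trC (-x) η)) ((1, 0))
    rw [Finset.sum_add_distrib, Finset.sum_add_distrib, Finset.sum_sub_distrib,
      Finset.sum_sub_distrib, S1, S2, Finset.sum_const, Finset.card_univ,
      nsmul_eq_mul, cardT] at hs
    have hs' : ∑ x : Torus2 N, j η x (x + (0, 1)) = (N : ℝ) ^ 2 * C₂' η := by
      rw [hs]; ring
    simp only [hC₂def]
    rw [hs', one_div, ← mul_assoc, inv_mul_cancel₀ N2_ne, one_mul]
  -- primed master equations
  have E1' : ∀ ζ, j ζ 0 ((1, 0) : Torus2 N)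
      = h' (trC (-e₁ N) ζ) - h' ζ + (g' ζ - g' (trC (e₂ N) ζ)) + C₁ ζ := by
    intro ζ
    have t0 := (H ζ 0).1
    rw [zero_add, neg_zero, trC_zero, zero_sub, neg_neg, hC₁' ζ] at t0
    exact t0
  have E2' : ∀ ζ, j ζ 0 ((0, 1) : Torus2 N)
      = h' (trC (-e₂ N) ζ) - h' ζ + (g' (trC (e₁ N) ζ) - g' ζ) + C₂ ζ := by
    intro ζ
    have t0 := (H ζ 0).2.1
    rw [zero_add, neg_zero, trC_zero, zero_sub, neg_neg, hC₂' ζ] at t0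
    exact t0
  set p : (Torus2 N → Bool) → ℝ := fun ζ => h ζ - h' ζ with hpdef
  set q : (Torus2 N → Bool) → ℝ := fun ζ => g ζ - g' ζ with hqdef
  have hd1 : ∀ ζ, p (trC (-e₁ N) ζ) - p ζ + (q ζ - q (trC (e₂ N) ζ)) = 0 := by
    intro ζ
    have a := E1 ζ
    have b := E1' ζ
    simp only [hpdef, hqdef]
    linarith
  have hd2 : ∀ ζ, p (trC (-e₂ N) ζ) - p ζ + (q (trC (e₁ N) ζ) - q ζ) = 0 := by
    intro ζ
    have a := E2 ζ
    have b := E2' ζ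
    simp only [hpdef, hqdef]
    linarith
  have hLp : ∀ η, Lf p η = 0 := by
    intro η
    have hi := ident3 p q η
    have d1a := hd1 (trC (e₁ N) η)
    have d1b := hd1 η
    have d2a := hd2 (trC (e₂ N) η)
    have d2b := hd2 η
    linarith
  have hLq : ∀ η, Lf q η = 0 := by
    intro η
    have hi := ident4 p q η
    have d1a := hd1 η
    have d1b := hd1 (trC (-e₂ N) η)
    have d2a := hd2 (trC (-e₁ N) η)
    have d2b := hd2 η
    linarith
  have hp := Lf_zero_inv p hLp
  have hq := Lf_zero_inv q hLq
  exact ⟨fun η => ⟨hC₁' η, hC₂' η⟩, fun η z => hp z η, fun η z => hq z η⟩
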